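/- GT_X(t) ≥ 0 for all t ∈ D¹_X if X is IFR (i.e., the hazard rate h_X(t) = H_X'(t) is nondecreasing), and GT_X(t) ≤ 0 for all t ∈ D¹_X if X is DFR (h_X nonincreasing). -/

import Mathlib

open MeasureTheory intervalIntegral

noncomputable def GTindex (H : ℝ → ℝ) (t : ℝ) : ℝ :=
  1 - 2 / (t * H t) * ∫ u in (0:ℝ)..t, H u

lemma aux_cont (H h : ℝ → ℝ) (hderiv : ∀ u, 0 ≤ u → HasDerivAt H (h u) u) :
    ContinuousOn H (Set.Ici 0) :=
  fun u hu => (hderiv u hu).continuousAt.continuousWithinAt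

lemma aux_diff (H h : ℝ → ℝ) (hderiv : ∀ u, 0 ≤ u → HasDerivAt H (h u) u) :
    DifferentiableOn ℝ H (interior (Set.Ici (0:ℝ))) := by
  rw [interior_Ici]
  exact fun u hu => (hderiv u hu.le).differentiableAt.differentiableWithinAt

lemma aux_int (H h : ℝ → ℝ) (hderiv : ∀ u, 0 ≤ u → HasDerivAt H (h u) u)
    {t : ℝ} (ht : 0 < t) : IntervalIntegrable H volume 0 t := by
  apply ContinuousOn.intervalIntegrable
  rw [Set.uIcc_of_le ht.le]
  exact (aux_cont H h hderiv).mono (Set.Icc_subset_Ici_self)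

lemma aux_lin_int {t c : ℝ} (ht : 0 < t) :
    (∫ u in (0:ℝ)..t, u / t * c) = t * c / 2 := by
  have e : ∀ u : ℝ, u / t * c = (c / t) * u := fun u => by ring
  simp_rw [e]
  rw [intervalIntegral.integral_const_mul, integral_id]
  field_simp
  ring

lemma aux_pt {H : ℝ → ℝ} (hH0 : H 0 = 0) (hconv : ConvexOn ℝ (Set.Ici 0) H)
    {t u : ℝ} (ht : 0 < t) (hu : u ∈ Set.Icc (0:ℝ) t) : H u ≤ u / t * H t := by
  have h1 : (1 - u / t) + u / t = 1 := by ring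
  have h2 : (0:ℝ) ≤ 1 - u / t := by
    have : u / t ≤ 1 := (div_le_one ht).2 hu.2
    linarith
  have h3 : (0:ℝ) ≤ u / t := div_nonneg hu.1 ht.le
  have := hconv.2 (Set.self_mem_Ici) (Set.mem_Ici.2 ht.le) h2 h3 h1
  simp only [smul_eq_mul, mul_zero, zero_add, hH0, mul_zero] at this
  rw [div_mul_cancel₀ u ht.ne'] at this
  linarith

theorem stmt1 (H h : ℝ → ℝ) (hH0 : H 0 = 0)
    (hderiv : ∀ u, 0 ≤ u → HasDerivAt H (h u) u) :
    (MonotoneOn h (Set.Ici 0) → ∀ t, 0 < t → 0 < H t → 0 ≤ GTindex H t) ∧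
    (AntitoneOn h (Set.Ici 0) → ∀ t, 0 < t → 0 < H t → GTindex H t ≤ 0) := by
  have hcont := aux_cont H h hderiv
  have hdiff := aux_diff H h hderiv
  have hderiv' : ∀ u ∈ interior (Set.Ici (0:ℝ)), deriv H u = h u := by
    rw [interior_Ici]
    exact fun u hu => (hderiv u hu.le).deriv
  constructor
  · intro hmono t ht hHt
    have hconv : ConvexOn ℝ (Set.Ici 0) H := by
      apply MonotoneOn.convexOn_of_deriv (convex_Ici 0) hcont hdiff
      intro a ha b hb hab
      rw [hderiv' a ha, hderiv' b hb]
      rw [interior_Ici] at ha hb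
      exact hmono (Set.mem_Ici.2 ha.le) (Set.mem_Ici.2 hb.le) hab
    have hint : (∫ u in (0:ℝ)..t, H u) ≤ t * H t / 2 := by
      calc (∫ u in (0:ℝ)..t, H u) ≤ ∫ u in (0:ℝ)..t, u / t * H t := by
            apply intervalIntegral.integral_mono_on ht.le (aux_int H h hderiv ht)
            · apply ContinuousOn.intervalIntegrable
              exact (continuous_id.div_const t).mul continuous_const |>.continuousOn
            · exact fun u hu => aux_pt hH0 hconv ht hu
        _ = t * H t / 2 := aux_lin_int ht
    unfold GTindex
    rw [sub_nonneg, div_mul_eq_mul_div, div_le_one (by positivity)]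
    linarith
  · intro hanti t ht hHt
    have hconc : ConcaveOn ℝ (Set.Ici 0) H := by
      apply AntitoneOn.concaveOn_of_deriv (convex_Ici 0) hcont hdiff
      intro a ha b hb hab
      rw [hderiv' a ha, hderiv' b hb]
      rw [interior_Ici] at ha hb
      exact hanti (Set.mem_Ici.2 ha.le) (Set.mem_Ici.2 hb.le) hab
    have hconv : ConvexOn ℝ (Set.Ici 0) (fun u => -H u) := hconc.neg
    have hint : t * H t / 2 ≤ (∫ u in (0:ℝ)..t, H u) := by
      have key : (∫ u in (0:ℝ)..t, -H u) ≤ t * (-H t) / 2 := by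
        calc (∫ u in (0:ℝ)..t, -H u) ≤ ∫ u in (0:ℝ)..t, u / t * (-H t) := by
              apply intervalIntegral.integral_mono_on ht.le
                ((aux_int H h hderiv ht).neg)
              · apply ContinuousOn.intervalIntegrable
                exact (continuous_id.div_const t).mul continuous_const |>.continuousOn
              · intro u hu
                exact aux_pt (by simp [hH0]) hconv ht hu
          _ = t * (-H t) / 2 := aux_lin_int ht
      rw [intervalIntegral.integral_neg] at key
      linarith
    unfold GTindex
    rw [sub_nonpos, div_mul_eq_mul_div, le_div_iff₀ (by positivity)]
    linarith
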